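/- Let f be analytic in the unit disc 𝔻 with σ_M(f) > 0, where σ_M(f) = limsup_{r→1⁻} log⁺log⁺M(r,f)/log(1/(1-r)) and λ_M(f) = liminf_{r→1⁻} log⁺log⁺M(r,f)/log(1/(1-r)). Let K(r,f) = r·(log M(r,f))'₊ and λ_*(f) = liminf_{r→1⁻} log⁺K(r,f)/log(1/(1-r)). Then λ_M(f) + λ_M(f)/σ_M(f) ≤ λ_*(f) (with the convention λ_M(f)/σ_M(f) = 0 when σ_M(f) = ∞ and λ_M(f) < ∞, and the inequality understood trivially when λ_M(f) = ∞). -/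

import Mathlib

open Filter Set

/-- Maximum modulus `M(r,f) = max_{|z|=r} |f(z)|`. -/
noncomputable def maxMod (f : ℂ → ℂ) (r : ℝ) : ℝ :=
  sSup ((fun z => ‖f z‖) '' Metric.sphere (0:ℂ) r)

/-- `log⁺ x = max (log x) 0`. -/
noncomputable def logPlus (x : ℝ) : ℝ := max (Real.log x) 0

/-- Lower order of growth `λ_M(f)`. -/
noncomputable def lowerOrder (f : ℂ → ℂ) : EReal :=
  Filter.liminf
    (fun r : ℝ => ((logPlus (logPlus (maxMod f r)) / Real.log (1 / (1 - r)) : ℝ) : EReal))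
    (nhdsWithin 1 (Set.Iio 1))

/-- Order of growth `σ_M(f)`. -/
noncomputable def upperOrder (f : ℂ → ℂ) : EReal :=
  Filter.limsup
    (fun r : ℝ => ((logPlus (logPlus (maxMod f r)) / Real.log (1 / (1 - r)) : ℝ) : EReal))
    (nhdsWithin 1 (Set.Iio 1))

/-- `K(r,f) = r · (log M(r,f))'₊`, using the right derivative. -/
noncomputable def Kfun (f : ℂ → ℂ) (r : ℝ) : ℝ :=
  r * derivWithin (fun t => Real.log (maxMod f t)) (Set.Ici r) r

/-- `λ_*(f) = liminf_{r→1⁻} log⁺ K(r,f) / log(1/(1-r))`. -/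
noncomputable def lowerStar (f : ℂ → ℂ) : EReal :=
  Filter.liminf
    (fun r : ℝ => ((logPlus (Kfun f r) / Real.log (1 / (1 - r)) : ℝ) : EReal))
    (nhdsWithin 1 (Set.Iio 1))

section MMaux
open Metric Topology
variable {f : ℂ → ℂ}

lemma bddAbove_image_abs (hf : DifferentiableOn ℂ f (ball (0:ℂ) 1)) {r : ℝ} (hr1 : r < 1) :
    BddAbove ((fun z => ‖f z‖) '' sphere (0:ℂ) r) := by
  rcases lt_or_ge r 0 with h | h
  · rw [Metric.sphere_eq_empty_of_neg h]; simp
  · have hsub : sphere (0:ℂ) r ⊆ ball (0:ℂ) 1 := by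
      intro z hz
      simp only [mem_sphere_iff_norm, sub_zero] at hz
      simp [Metric.mem_ball, dist_zero_right, hz, hr1]
    exact ((isCompact_sphere (0:ℂ) r).image_of_continuousOn
      ((continuous_norm.comp_continuousOn (hf.continuousOn.mono hsub)))).bddAbove

lemma le_maxMod (hf : DifferentiableOn ℂ f (ball (0:ℂ) 1)) {r : ℝ} {z : ℂ} (hr1 : r < 1)
    (hz : ‖z‖ = r) : ‖f z‖ ≤ maxMod f r :=
  le_csSup (bddAbove_image_abs hf hr1) (mem_image_of_mem _ (by simp [mem_sphere_iff_norm, hz]))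

lemma maxMod_le {r C : ℝ} (hr : 0 ≤ r) (h : ∀ z ∈ sphere (0:ℂ) r, ‖f z‖ ≤ C) :
    maxMod f r ≤ C := by
  apply csSup_le
  · exact (NormedSpace.sphere_nonempty.mpr hr).image _
  · rintro x ⟨z, hz, rfl⟩; exact h z hz

lemma maxMod_nonneg (hf : DifferentiableOn ℂ f (ball (0:ℂ) 1)) {r : ℝ} (hr : 0 ≤ r) (hr1 : r < 1) :
    0 ≤ maxMod f r := by
  obtain ⟨z, hz⟩ := (NormedSpace.sphere_nonempty (E := ℂ) (x := 0) (r := r)).mpr hr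
  simp only [mem_sphere_iff_norm, sub_zero] at hz
  exact le_trans (norm_nonneg _) (le_maxMod hf hr1 (by simpa using hz))

lemma maxMod_mono (hf : DifferentiableOn ℂ f (ball (0:ℂ) 1)) {r₁ r₂ : ℝ} (h0 : 0 ≤ r₁)
    (h12 : r₁ ≤ r₂) (h21 : r₂ < 1) : maxMod f r₁ ≤ maxMod f r₂ := by
  rcases eq_or_lt_of_le (h0.trans h12) with h | h2pos
  · obtain rfl : r₂ = r₁ := le_antisymm (h.symm ▸ h0.trans (le_of_eq rfl) : r₂ ≤ r₁) h12
    exact le_rfl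
  · apply maxMod_le h0
    intro z hz
    simp only [mem_sphere_iff_norm, sub_zero] at hz
    have hcl : closure (ball (0:ℂ) r₂) = closedBall (0:ℂ) r₂ := closure_ball 0 h2pos.ne'
    have hd : DiffContOnCl ℂ f (ball (0:ℂ) r₂) := by
      constructor
      · exact hf.mono (ball_subset_ball (le_of_lt h21))
      · exact hf.continuousOn.mono (by rw [hcl]; exact closedBall_subset_ball h21)
    have := Complex.norm_le_of_forall_mem_frontier_norm_le (isBounded_ball (x := (0:ℂ)) (r := r₂)) hd
      (C := maxMod f r₂) ?_ (z := z) ?_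
    · simpa using this
    · intro w hw
      rw [frontier_ball 0 h2pos.ne'] at hw
      simp only [mem_sphere_iff_norm, sub_zero] at hw
      exact le_maxMod hf h21 (by simpa using hw)
    · rw [hcl]; simp [mem_closedBall, dist_zero_right, hz, h12]


/-- Hadamard three circles -/
lemma three_circles (hf : DifferentiableOn ℂ f (ball (0:ℂ) 1)) {r₁ r₂ t : ℝ}
    (h1 : 0 < r₁) (h12 : r₁ < r₂) (h21 : r₂ < 1) (ht : t ∈ Icc (0:ℝ) 1) :
    maxMod f (Real.exp ((1-t) * Real.log r₁ + t * Real.log r₂)) ≤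
      (maxMod f r₁) ^ (1-t) * (maxMod f r₂) ^ t := by
  set s₁ := Real.log r₁ with hs₁
  set s₂ := Real.log r₂ with hs₂
  have hs12 : s₁ < s₂ := Real.log_lt_log h1 h12
  set φ : ℂ → ℂ := fun z => Complex.exp ((s₂ - s₁) * z + s₁) with hφ
  have habs : ∀ z : ℂ, ‖φ z‖ = Real.exp ((s₂ - s₁) * z.re + s₁) := by
    intro z
    rw [hφ, Complex.norm_exp]
    congr 1
    simp [Complex.add_re, Complex.mul_re, Complex.ofReal_re, Complex.ofReal_im]
  have hrange : ∀ z : ℂ, z.re ∈ Icc (0:ℝ) 1 → ‖φ z‖ ∈ Icc r₁ r₂ := by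
    intro z hz
    rw [habs]
    constructor
    · rw [← Real.exp_log h1]
      apply Real.exp_le_exp.mpr
      nlinarith [hz.1, hz.2, hs12]
    · rw [← Real.exp_log (h1.trans h12)]
      apply Real.exp_le_exp.mpr
      nlinarith [hz.1, hz.2, hs12]
  have hmem : ∀ z : ℂ, z.re ∈ Icc (0:ℝ) 1 → φ z ∈ ball (0:ℂ) 1 := by
    intro z hz
    have := (hrange z hz).2
    simp only [mem_ball, dist_zero_right]
    exact lt_of_le_of_lt this h21
  set h : ℂ → ℂ := fun z => f (φ z) with hh
  have hφdiff : Differentiable ℂ φ := by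
    apply Complex.differentiable_exp.comp
    exact (differentiable_const _ |>.mul differentiable_id).add (differentiable_const _)
  have hd : DiffContOnCl ℂ h (Complex.HadamardThreeLines.verticalStrip 0 1) := by
    constructor
    · apply hf.comp (hφdiff.differentiableOn)
      intro z hz
      exact hmem z ⟨hz.1.le, hz.2.le⟩
    · rw [Complex.HadamardThreeLines.verticalStrip, Complex.closure_preimage_re, closure_Ioo zero_ne_one]
      apply hf.continuousOn.comp hφdiff.continuous.continuousOn
      intro z hz
      exact hmem z hz
  have hB : BddAbove ((norm ∘ h) '' Complex.HadamardThreeLines.verticalClosedStrip 0 1) := by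
    refine ⟨maxMod f r₂, ?_⟩
    rintro x ⟨z, hz, rfl⟩
    simp only [Function.comp_apply, hh]
    calc ‖f (φ z)‖ ≤ maxMod f (‖φ z‖) :=
          le_maxMod hf (lt_of_le_of_lt (hrange z hz).2 h21) rfl
      _ ≤ maxMod f r₂ := maxMod_mono hf (norm_nonneg _) (hrange z hz).2 h21
  have key : ∀ z : ℂ, z.re ∈ Icc (0:ℝ) 1 →
      ‖h z‖ ≤ (maxMod f r₁) ^ (1 - z.re) * (maxMod f r₂) ^ z.re := by
    intro z hz
    have := Complex.HadamardThreeLines.norm_le_interp_of_mem_verticalClosedStrip₀₁' h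
      (a := maxMod f r₁) (b := maxMod f r₂) hz hd hB ?_ ?_
    · simpa using this
    · intro w hw
      simp only [mem_preimage, mem_singleton_iff] at hw
      simp only [hh]
      have : ‖φ w‖ = r₁ := by
        rw [habs, hw]; simp [hs₁, Real.exp_log h1]
      exact le_trans (le_maxMod hf (h12.trans h21) this) le_rfl
    · intro w hw
      simp only [mem_preimage, mem_singleton_iff] at hw
      simp only [hh]
      have : ‖φ w‖ = r₂ := by
        rw [habs, hw]; simp [hs₂, Real.exp_log (h1.trans h12)]
      exact le_trans (le_maxMod hf h21 this) le_rfl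
  -- now bound maxMod at radius exp((1-t)s₁ + t s₂)
  set r := Real.exp ((1-t) * s₁ + t * s₂) with hr
  apply maxMod_le (Real.exp_pos _).le
  intro w hw
  simp only [mem_sphere_iff_norm, sub_zero] at hw
  -- find z with φ z = w, z.re = t
  have hne : (s₂ - s₁ : ℝ) ≠ 0 := sub_ne_zero.mpr (ne_of_gt hs12)
  set z : ℂ := (t : ℂ) + ((w.arg / (s₂ - s₁) : ℝ) : ℂ) * Complex.I with hz
  have hzre : z.re = t := by
    rw [hz]; simp [← Complex.ofReal_sub, ← Complex.ofReal_div]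
  have hφz : φ z = w := by
    show Complex.exp (((s₂ : ℂ) - (s₁ : ℂ)) * z + (s₁ : ℂ)) = w
    have harg : ((s₂ : ℂ) - (s₁ : ℂ)) * z + (s₁ : ℂ)
        = (((1-t) * s₁ + t * s₂ : ℝ) : ℂ) + (w.arg : ℂ) * Complex.I := by
      rw [hz]
      have hne' : (s₂ : ℂ) - (s₁ : ℂ) ≠ 0 := by
        rw [← Complex.ofReal_sub]
        exact_mod_cast Complex.ofReal_ne_zero.mpr hne
      push_cast
      field_simp
      ring
    rw [harg, Complex.exp_add, ← Complex.ofReal_exp, ← hr]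
    have hcast : (r : ℂ) = (‖w‖ : ℂ) := by exact_mod_cast (hw ▸ rfl : r = ‖w‖)
    rw [hcast, Complex.norm_mul_exp_arg_mul_I]
  have hk := key z (by rw [hzre]; exact ht)
  rw [hzre] at hk
  have : h z = f w := by rw [hh]; simp only [hφz]
  rwa [this] at hk

variable {r₀ : ℝ}

lemma one_le_maxMod_exp (hf : DifferentiableOn ℂ f (ball (0:ℂ) 1)) (h0 : 0 < r₀) (h1 : r₀ < 1)
    (hM : 1 ≤ maxMod f r₀) {s : ℝ} (hs : s ∈ Ico (Real.log r₀) 0) :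
    1 ≤ maxMod f (Real.exp s) := by
  have h2 : Real.exp s < 1 := Real.exp_lt_one_iff.mpr hs.2
  have h3 : r₀ ≤ Real.exp s := by
    rw [← Real.exp_log h0]; exact Real.exp_le_exp.mpr hs.1
  exact hM.trans (maxMod_mono hf h0.le h3 h2)

lemma convexOn_logMaxMod (hf : DifferentiableOn ℂ f (ball (0:ℂ) 1)) (h0 : 0 < r₀) (h1 : r₀ < 1)
    (hM : 1 ≤ maxMod f r₀) :
    ConvexOn ℝ (Ico (Real.log r₀) 0) (fun s => Real.log (maxMod f (Real.exp s))) := by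
  have key : ∀ x ∈ Ico (Real.log r₀) 0, ∀ y ∈ Ico (Real.log r₀) 0, ∀ a b : ℝ,
      0 ≤ a → 0 ≤ b → a + b = 1 → x < y →
      Real.log (maxMod f (Real.exp (a*x + b*y))) ≤
        a * Real.log (maxMod f (Real.exp x)) + b * Real.log (maxMod f (Real.exp y)) := by
    intro x hx y hy a b ha hb hab hxy
    have hex : (0:ℝ) < Real.exp x := Real.exp_pos _
    have hxy' : Real.exp x < Real.exp y := Real.exp_lt_exp.mpr hxy
    have hy1 : Real.exp y < 1 := Real.exp_lt_one_iff.mpr hy.2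
    have h3 := three_circles hf hex hxy' hy1 (t := b) ⟨hb, by linarith⟩
    rw [Real.log_exp, Real.log_exp] at h3
    have hab' : 1 - b = a := by linarith
    rw [hab'] at h3
    have hMx : 1 ≤ maxMod f (Real.exp x) := one_le_maxMod_exp hf h0 h1 hM hx
    have hMy : 1 ≤ maxMod f (Real.exp y) := one_le_maxMod_exp hf h0 h1 hM hy
    have hMc : 1 ≤ maxMod f (Real.exp (a*x + b*y)) := by
      apply one_le_maxMod_exp hf h0 h1 hM
      constructor
      · have h1' : a * Real.log r₀ ≤ a * x := mul_le_mul_of_nonneg_left hx.1 ha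
        have h2' : b * Real.log r₀ ≤ b * y := mul_le_mul_of_nonneg_left hy.1 hb
        have h3' : a * Real.log r₀ + b * Real.log r₀ = Real.log r₀ := by
          rw [← add_mul, hab, one_mul]
        linarith
      · rcases lt_or_eq_of_le ha with ha' | ha'
        · nlinarith [mul_pos ha' (neg_pos.mpr hx.2), mul_nonpos_of_nonneg_of_nonpos hb hy.2.le]
        · have hb1 : b = 1 := by linarith
          rw [← ha', hb1]; simpa using hy.2
    calc Real.log (maxMod f (Real.exp (a*x + b*y)))
        ≤ Real.log ((maxMod f (Real.exp x)) ^ a * (maxMod f (Real.exp y)) ^ b) :=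
          Real.log_le_log (by linarith) h3
      _ = a * Real.log (maxMod f (Real.exp x)) + b * Real.log (maxMod f (Real.exp y)) := by
          rw [Real.log_mul (by positivity) (by positivity),
            Real.log_rpow (by linarith), Real.log_rpow (by linarith)]
  refine ⟨convex_Ico _ _, ?_⟩
  intro x hx y hy a b ha hb hab
  simp only [smul_eq_mul]
  rcases lt_trichotomy x y with h | h | h
  · exact key x hx y hy a b ha hb hab h
  · subst h
    have hxx : a * x + b * x = x := by rw [← add_mul, hab, one_mul]
    rw [hxx, ← add_mul, hab, one_mul]
  · have := key y hy x hx b a hb ha (by linarith) h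
    calc Real.log (maxMod f (Real.exp (a*x + b*y)))
        = Real.log (maxMod f (Real.exp (b*y + a*x))) := by ring_nf
      _ ≤ b * Real.log (maxMod f (Real.exp y)) + a * Real.log (maxMod f (Real.exp x)) := this
      _ = a * Real.log (maxMod f (Real.exp x)) + b * Real.log (maxMod f (Real.exp y)) := by ring

lemma exists_rightDeriv {g : ℝ → ℝ} {s₀ s : ℝ}
    (hconv : ConvexOn ℝ (Ico s₀ (0:ℝ)) g) (hs : s ∈ Ioo s₀ 0) :
    ∃ d, HasDerivWithinAt g d (Ici s) s ∧ ∀ ρ ∈ Ico s₀ s, (g s - g ρ) / (s - ρ) ≤ d := by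
  have hsD : s ∈ Ico s₀ 0 := ⟨hs.1.le, hs.2⟩
  have hne : (Ioo s 0).Nonempty := nonempty_Ioo.mpr hs.2
  have hmemD : ∀ y ∈ Ioo s 0, y ∈ Ico s₀ 0 := fun y hy => ⟨(hs.1.trans hy.1).le, hy.2⟩
  have hmono : MonotoneOn (slope g s) (Ioo s 0) := by
    intro y₁ hy₁ y₂ hy₂ h12
    rw [slope_def_field, slope_def_field]
    exact hconv.secant_mono hsD (hmemD y₁ hy₁) (hmemD y₂ hy₂)
      (ne_of_gt hy₁.1) (ne_of_gt hy₂.1) h12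
  have hbdd : BddBelow (slope g s '' Ioo s 0) := by
    refine ⟨slope g s₀ s, ?_⟩
    rintro x ⟨y, hy, rfl⟩
    rw [slope_def_field, slope_def_field]
    have hs₀mem : s₀ ∈ Ico s₀ (0:ℝ) := ⟨le_rfl, hs.1.trans hs.2⟩
    exact hconv.slope_mono_adjacent hs₀mem (hmemD y hy) hs.1 hy.1
  set d := sInf (slope g s '' Ioo s 0) with hd
  have htd : Tendsto (slope g s) (𝓝[>] s) (𝓝 d) :=
    MonotoneOn.tendsto_nhdsWithin_Ioo_right hne hmono hbdd
  have hder : HasDerivWithinAt g d (Ioi s) s := by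
    have h1 : Ioi s \ {s} = Ioi s := diff_singleton_eq_self (by simp)
    rw [hasDerivWithinAt_iff_tendsto_slope, h1]
    exact htd
  refine ⟨d, hder.Ici_of_Ioi, ?_⟩
  intro ρ hρ
  apply le_csInf (hne.image _)
  rintro x ⟨y, hy, rfl⟩
  rw [slope_def_field]
  exact hconv.slope_mono_adjacent ⟨hρ.1, hρ.2.trans hs.2⟩ (hmemD y hy) hρ.2 hy.1

lemma Kfun_eq_rightDeriv {d r : ℝ} (hr : 0 < r)
    (hd : HasDerivWithinAt (fun s => Real.log (maxMod f (Real.exp s))) d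
      (Ici (Real.log r)) (Real.log r)) :
    Kfun f r = d := by
  have hlog : HasDerivAt Real.log r⁻¹ r := Real.hasDerivAt_log hr.ne'
  have hmaps : MapsTo Real.log (Ici r) (Ici (Real.log r)) := fun t ht =>
    Real.log_le_log hr ht
  have hcomp : HasDerivWithinAt ((fun s => Real.log (maxMod f (Real.exp s))) ∘ Real.log)
      (d * r⁻¹) (Ici r) r :=
    hd.comp r (hlog.hasDerivWithinAt) hmaps
  have hcongr : HasDerivWithinAt (fun t => Real.log (maxMod f t)) (d * r⁻¹) (Ici r) r := by
    apply hcomp.congr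
    · intro y hy
      simp only [Function.comp_apply, Real.exp_log (hr.trans_le hy)]
    · simp only [Function.comp_apply, Real.exp_log hr]
  rw [Kfun, hcongr.derivWithin (uniqueDiffOn_Ici r r self_mem_Ici)]
  field_simp

lemma Kfun_ge_slope (hf : DifferentiableOn ℂ f (ball (0:ℂ) 1)) {r₀' ρ r : ℝ} (h0 : 0 < r₀')
    (hM : 1 ≤ maxMod f r₀') (hρ : r₀' ≤ ρ) (hρr : ρ < r) (hr1 : r < 1) :
    (Real.log (maxMod f r) - Real.log (maxMod f ρ)) / (Real.log r - Real.log ρ) ≤ Kfun f r := by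
  have hρpos : 0 < ρ := h0.trans_le hρ
  have hrpos : 0 < r := hρpos.trans hρr
  have h1 : r₀' < 1 := lt_of_le_of_lt (hρ.trans hρr.le) hr1
  have hconv := convexOn_logMaxMod hf h0 h1 hM
  have hsmem : Real.log r ∈ Ioo (Real.log r₀') 0 :=
    ⟨Real.log_lt_log h0 (lt_of_le_of_lt hρ hρr), Real.log_neg hrpos hr1⟩
  obtain ⟨d, hd, hslope⟩ := exists_rightDeriv hconv hsmem
  have hK : Kfun f r = d := Kfun_eq_rightDeriv hrpos hd
  rw [hK]
  have hmem : Real.log ρ ∈ Ico (Real.log r₀') (Real.log r) :=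
    ⟨Real.log_le_log h0 hρ, Real.log_lt_log hρpos hρr⟩
  have := hslope (Real.log ρ) hmem
  rwa [Real.exp_log hrpos, Real.exp_log hρpos] at this


lemma maxMod_nonneg' (f : ℂ → ℂ) (r : ℝ) : 0 ≤ maxMod f r := by
  apply Real.sSup_nonneg
  rintro x ⟨z, _, rfl⟩
  exact norm_nonneg _

lemma le_exp_logPlus (x : ℝ) : x ≤ Real.exp (logPlus x) := by
  rcases le_or_gt x 0 with h | h
  · exact h.trans (Real.exp_pos _).le
  · calc x = Real.exp (Real.log x) := (Real.exp_log h).symm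
      _ ≤ Real.exp (logPlus x) := Real.exp_le_exp.mpr (le_max_left _ _)

lemma log_lt_of_lt_logPlus {x c : ℝ} (hc : 0 < c) (h : c < logPlus x) : c < Real.log x :=
  (lt_max_iff.mp h).resolve_right (not_lt.mpr hc.le)

lemma log_le_logPlus (x : ℝ) : Real.log x ≤ logPlus x := le_max_left _ _

lemma logPlus_nonneg (x : ℝ) : 0 ≤ logPlus x := le_max_right _ _

-- positivity of the log-weight near 1
lemma eventually_Ioo : ∀ᶠ r in 𝓝[<] (1:ℝ), r ∈ Ioo (0:ℝ) 1 :=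
  Ioo_mem_nhdsLT_of_mem (by norm_num : (1:ℝ) ∈ Ioc (0:ℝ) 1)

lemma L_pos {r : ℝ} (hr : r ∈ Ioo (0:ℝ) 1) : 0 < Real.log (1 / (1 - r)) := by
  apply Real.log_pos
  rw [lt_div_iff₀ (by linarith [hr.2])]
  linarith [hr.1]

lemma tendsto_X : Tendsto (fun r : ℝ => 1 / (1 - r)) (𝓝[<] 1) atTop := by
  have hm : Tendsto (fun r : ℝ => 1 - r) (𝓝[<] 1) (𝓝[>] 0) := by
    apply tendsto_nhdsWithin_of_tendsto_nhds_of_eventually_within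
    · have hc : Continuous (fun r : ℝ => 1 - r) := by continuity
      have : Tendsto (fun r : ℝ => 1 - r) (𝓝 1) (𝓝 0) := by simpa using hc.tendsto 1
      exact this.mono_left nhdsWithin_le_nhds
    · filter_upwards [self_mem_nhdsWithin] with r hr
      simp only [mem_Iio] at hr
      simpa [mem_Ioi] using hr
  simpa [one_div, Function.comp_def] using tendsto_inv_nhdsGT_zero.comp hm

lemma tendsto_L : Tendsto (fun r : ℝ => Real.log (1 / (1 - r))) (𝓝[<] 1) atTop :=
  Real.tendsto_log_atTop.comp tendsto_X

/-- From an eventual power lower bound on `Kfun` we get a lower bound on `lowerStar`. -/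
lemma lowerStar_ge_of_core {C e ε : ℝ} (hC : 0 < C) (hε : 0 < ε)
    (hcore : ∀ᶠ r in 𝓝[<] (1:ℝ), r ∈ Ioo (0:ℝ) 1 ∧
      C * (1 / (1 - r)) ^ e ≤ Kfun f r) :
    ((e - ε : ℝ) : EReal) ≤ lowerStar f := by
  refine Filter.le_liminf_of_le (by isBoundedDefault) ?_
  have hL : ∀ᶠ r in 𝓝[<] (1:ℝ), -Real.log C ≤ ε * Real.log (1 / (1 - r)) := by
    have : Tendsto (fun r : ℝ => ε * Real.log (1 / (1 - r))) (𝓝[<] 1) atTop :=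
      tendsto_L.const_mul_atTop hε
    exact this.eventually_ge_atTop _
  filter_upwards [hcore, hL] with r ⟨hr, hK⟩ hLr
  have hLpos : 0 < Real.log (1 / (1 - r)) := L_pos hr
  have hX : (0:ℝ) < 1 / (1 - r) := by
    rw [lt_div_iff₀ (by linarith [hr.2])]; linarith
  -- log K ≥ log C + e * L
  have hKpos : 0 < Kfun f r := lt_of_lt_of_le (by positivity) hK
  have hlogK : Real.log C + e * Real.log (1 / (1 - r)) ≤ Real.log (Kfun f r) := by
    calc Real.log C + e * Real.log (1 / (1 - r))
        = Real.log (C * (1 / (1 - r)) ^ e) := by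
          rw [Real.log_mul hC.ne' (by positivity), Real.log_rpow hX]
      _ ≤ Real.log (Kfun f r) := Real.log_le_log (by positivity) hK
  rw [EReal.coe_le_coe_iff]
  rw [le_div_iff₀ hLpos]
  have h1 : Real.log (Kfun f r) ≤ logPlus (Kfun f r) := log_le_logPlus _
  nlinarith [hlogK, hLr, h1]

/-- existence of a radius with large maximum modulus -/
lemma exists_r₀ (hsigma : 0 < upperOrder f) :
    ∃ r₀ : ℝ, 0 < r₀ ∧ r₀ < 1 ∧ 1 ≤ maxMod f r₀ := by
  by_contra hcon
  push_neg at hcon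
  have hev : ∀ᶠ r in 𝓝[<] (1:ℝ),
      ((logPlus (logPlus (maxMod f r)) / Real.log (1 / (1 - r)) : ℝ) : EReal) ≤ (0:EReal) := by
    filter_upwards [eventually_Ioo] with r hr
    have hM : maxMod f r < 1 := hcon r hr.1 hr.2
    have hlog : Real.log (maxMod f r) ≤ 0 := Real.log_nonpos (maxMod_nonneg' f r) hM.le
    have h1 : logPlus (maxMod f r) = 0 := max_eq_right hlog
    have h2 : logPlus (logPlus (maxMod f r)) = 0 := by
      rw [h1, logPlus, Real.log_zero, max_self]
    rw [h2, zero_div]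
    simp
  have h := Filter.limsup_le_of_le (by isBoundedDefault) hev
  rw [upperOrder] at hsigma
  exact absurd (hsigma.trans_le h) (lt_irrefl 0)

lemma logM_lower {r a' : ℝ} (hr : r ∈ Ioo (0:ℝ) 1) (ha' : 0 < a')
    (h : a' < logPlus (logPlus (maxMod f r)) / Real.log (1/(1-r))) :
    (1/(1-r)) ^ a' < Real.log (maxMod f r) := by
  have hL := L_pos hr
  have hX : (0:ℝ) < 1/(1-r) := by
    rw [lt_div_iff₀ (by linarith [hr.2])]; linarith
  have h1 : a' * Real.log (1/(1-r)) < logPlus (logPlus (maxMod f r)) := by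
    rw [← lt_div_iff₀ hL] at *; exact h
  have hc : 0 < a' * Real.log (1/(1-r)) := mul_pos ha' hL
  have h2 := log_lt_of_lt_logPlus hc h1
  have hp : 0 < logPlus (maxMod f r) := by
    rcases (logPlus_nonneg (maxMod f r)).lt_or_eq with h' | h'
    · exact h'
    · rw [← h', Real.log_zero] at h2; linarith
  have h3 : Real.exp (a' * Real.log (1/(1-r))) < logPlus (maxMod f r) :=
    (Real.lt_log_iff_exp_lt hp).mp h2
  have h4 := log_lt_of_lt_logPlus (Real.exp_pos _) h3
  calc (1/(1-r)) ^ a' = Real.exp (Real.log (1/(1-r)) * a') := Real.rpow_def_of_pos hX a'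
    _ = Real.exp (a' * Real.log (1/(1-r))) := by rw [mul_comm]
    _ < Real.log (maxMod f r) := h4

lemma logM_upper {t b' : ℝ} (ht : t ∈ Ioo (0:ℝ) 1)
    (h : logPlus (logPlus (maxMod f t)) / Real.log (1/(1-t)) < b') :
    Real.log (maxMod f t) ≤ (1/(1-t)) ^ b' := by
  have hL := L_pos ht
  have hX : (0:ℝ) < 1/(1-t) := by
    rw [lt_div_iff₀ (by linarith [ht.2])]; linarith
  have h1 : logPlus (logPlus (maxMod f t)) < b' * Real.log (1/(1-t)) := by
    rw [div_lt_iff₀ hL] at h; exact h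
  calc Real.log (maxMod f t) ≤ logPlus (maxMod f t) := log_le_logPlus _
    _ ≤ Real.exp (logPlus (logPlus (maxMod f t))) := le_exp_logPlus _
    _ ≤ Real.exp (b' * Real.log (1/(1-t))) := Real.exp_le_exp.mpr h1.le
    _ = (1/(1-t)) ^ b' := by rw [Real.rpow_def_of_pos hX, mul_comm]

lemma eventually_lower {a' : ℝ} (h : ((a' : ℝ) : EReal) < lowerOrder f) :
    ∀ᶠ r in 𝓝[<] (1:ℝ), a' < logPlus (logPlus (maxMod f r)) / Real.log (1/(1-r)) := by
  have := Filter.eventually_lt_of_lt_liminf (f := 𝓝[<] (1:ℝ)) h (by isBoundedDefault)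
  filter_upwards [this] with r hr
  exact_mod_cast hr

lemma eventually_upper {b' : ℝ} (h : upperOrder f < ((b' : ℝ) : EReal)) :
    ∀ᶠ r in 𝓝[<] (1:ℝ), logPlus (logPlus (maxMod f r)) / Real.log (1/(1-r)) < b' := by
  have := Filter.eventually_lt_of_limsup_lt (f := 𝓝[<] (1:ℝ)) h (by isBoundedDefault)
  filter_upwards [this] with r hr
  exact_mod_cast hr

/-- First estimate: `lowerStar ≥ a - 2ε` whenever `a ≤ lowerOrder`. -/
lemma estimate_one (hf : DifferentiableOn ℂ f (ball (0:ℂ) 1)) (hsigma : 0 < upperOrder f)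
    {a ε : ℝ} (hε : 0 < ε) (hεa : ε < a) (ha : (a : EReal) ≤ lowerOrder f) :
    ((a - 2*ε : ℝ) : EReal) ≤ lowerStar f := by
  obtain ⟨r₀, h0, h01, hM⟩ := exists_r₀ hsigma
  set a' := a - ε with ha'def
  have ha' : (0:ℝ) < a' := by simp [ha'def]; linarith
  have hlt : ((a' : ℝ) : EReal) < lowerOrder f :=
    lt_of_lt_of_le (EReal.coe_lt_coe_iff.mpr (by linarith)) ha
  have hc₀ : (0:ℝ) < -Real.log r₀ := by
    have := Real.log_neg h0 h01; linarith
  have hC : (0:ℝ) < 1/(2 * (-Real.log r₀)) := by positivity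
  have key : ((a' - ε : ℝ) : EReal) ≤ lowerStar f := by
    apply lowerStar_ge_of_core hC hε
    have hXa : ∀ᶠ r in 𝓝[<] (1:ℝ),
        2 * Real.log (maxMod f r₀) ≤ (1/(1-r)) ^ a' := by
      have := (tendsto_rpow_atTop ha').comp tendsto_X
      exact this.eventually_ge_atTop _
    have hrr₀ : ∀ᶠ r in 𝓝[<] (1:ℝ), r₀ < r :=
      eventually_of_mem (Ioo_mem_nhdsLT_of_mem ⟨h01, le_rfl⟩) (fun x hx => hx.1)
    filter_upwards [eventually_Ioo, eventually_lower hlt, hXa, hrr₀] with r hr hlow hX2 hr₀r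
    refine ⟨hr, ?_⟩
    have hXlow := logM_lower hr ha' hlow
    have hslope := Kfun_ge_slope hf h0 hM (le_refl r₀) hr₀r hr.2
    have hD0 : 0 < Real.log r - Real.log r₀ := by
      have := Real.log_lt_log h0 hr₀r; linarith
    have hDle : Real.log r - Real.log r₀ ≤ -Real.log r₀ := by
      have : Real.log r < 0 := Real.log_neg hr.1 hr.2
      linarith
    have hN : (1/(1-r)) ^ a' / 2 ≤ Real.log (maxMod f r) - Real.log (maxMod f r₀) := by
      linarith
    have hNn : (0:ℝ) ≤ Real.log (maxMod f r) - Real.log (maxMod f r₀) := by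
      have hXp : (0:ℝ) < 1/(1-r) := by
        rw [lt_div_iff₀ (by linarith [hr.2])]; linarith [hr.1]
      have : (0:ℝ) < (1/(1-r)) ^ a' := Real.rpow_pos_of_pos hXp a'
      linarith
    have hdiv : ((1/(1-r)) ^ a' / 2) / (-Real.log r₀) ≤
        (Real.log (maxMod f r) - Real.log (maxMod f r₀)) / (Real.log r - Real.log r₀) :=
      div_le_div₀ hNn hN hD0 hDle
    have heq : ((1/(1-r)) ^ a' / 2) / (-Real.log r₀) = (1/(2 * (-Real.log r₀))) * (1/(1-r)) ^ a' := by
      field_simp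
    rw [heq] at hdiv
    exact hdiv.trans hslope
  have : a' - ε = a - 2*ε := by rw [ha'def]; ring
  rwa [this] at key

/-- Second estimate, with the upper order information. -/
lemma estimate_two (hf : DifferentiableOn ℂ f (ball (0:ℂ) 1)) (hsigma : 0 < upperOrder f)
    {a b ε : ℝ} (hε : 0 < ε) (hεa : ε < a) (hb0 : 0 < b) (hab : a ≤ b)
    (ha : (a : EReal) ≤ lowerOrder f) (hb : upperOrder f ≤ (b : EReal)) :
    ((a - 2*ε + (a-ε)/(b+2*ε) : ℝ) : EReal) ≤ lowerStar f := by
  obtain ⟨r₀, h0, h01, hM⟩ := exists_r₀ hsigma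
  set a' := a - ε with ha'def
  set b' := b + ε with hb'def
  have ha' : (0:ℝ) < a' := by simp only [ha'def]; linarith
  have hb' : (0:ℝ) < b' := by simp only [hb'def]; linarith
  set θ := a' / (b' + ε) with hθdef
  set δ := a' * ε / (b' + ε) with hδdef
  have hθ : (0:ℝ) < θ := by apply div_pos ha'; linarith
  have hθ1 : θ < 1 := by
    rw [hθdef, div_lt_one (by linarith)]
    simp only [ha'def, hb'def]; linarith
  have hδ : (0:ℝ) < δ := by apply div_pos (by positivity); linarith
  have hθb' : θ * b' = a' - δ := by
    rw [hθdef, hδdef]; field_simp; ring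
  have hlt : ((a' : ℝ) : EReal) < lowerOrder f :=
    lt_of_lt_of_le (EReal.coe_lt_coe_iff.mpr (by simp only [ha'def]; linarith)) ha
  have hgt : upperOrder f < ((b' : ℝ) : EReal) :=
    lt_of_le_of_lt hb (EReal.coe_lt_coe_iff.mpr (by simp only [hb'def]; linarith))
  -- extract a uniform threshold for the upper bound
  have hcomb : ∀ᶠ t in 𝓝[<] (1:ℝ), t ∈ Ioo (0:ℝ) 1 ∧
      logPlus (logPlus (maxMod f t)) / Real.log (1/(1-t)) < b' :=
    eventually_Ioo.and (eventually_upper hgt)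
  obtain ⟨l, hl1, hl⟩ := mem_nhdsLT_iff_exists_Ioo_subset.mp hcomb
  set τ := max l 0 with hτdef
  have hτ1 : τ < 1 := max_lt hl1 one_pos
  have hbound : ∀ t, τ < t → t < 1 → Real.log (maxMod f t) ≤ (1/(1-t)) ^ b' := by
    intro t h1t h2t
    have htmem : t ∈ Ioo l 1 := ⟨lt_of_le_of_lt (le_max_left _ _) h1t, h2t⟩
    have := hl htmem
    exact logM_upper this.1 this.2
  -- tendsto facts
  have htheta : Tendsto (fun r : ℝ => (1-r) ^ θ) (𝓝[<] 1) (𝓝 0) := by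
    have hcont : ContinuousAt (fun x : ℝ => x ^ θ) 0 :=
      Real.continuousAt_rpow_const 0 θ (Or.inr hθ.le)
    have hc : Continuous (fun r : ℝ => 1 - r) := by continuity
    have hm : Tendsto (fun r : ℝ => 1 - r) (𝓝[<] (1:ℝ)) (𝓝 0) := by
      have := hc.tendsto (1:ℝ)
      simp only [sub_self] at this
      exact this.mono_left nhdsWithin_le_nhds
    have := hcont.tendsto.comp hm
    rwa [Real.zero_rpow hθ.ne'] at this
  have hminpos : (0:ℝ) < min (1-τ) (min (1-r₀) (1/2)) := by
    apply lt_min (by linarith)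
    exact lt_min (by linarith) (by norm_num)
  have hsmall : ∀ᶠ r in 𝓝[<] (1:ℝ), (1-r) ^ θ < min (1-τ) (min (1-r₀) (1/2)) :=
    htheta.eventually (gt_mem_nhds hminpos)
  have hXδ : ∀ᶠ r in 𝓝[<] (1:ℝ), (2:ℝ) ≤ (1/(1-r)) ^ δ :=
    ((tendsto_rpow_atTop hδ).comp tendsto_X).eventually_ge_atTop 2
  -- main core bound
  have key : ((a' + θ - ε : ℝ) : EReal) ≤ lowerStar f := by
    apply lowerStar_ge_of_core (C := (1:ℝ)/4) (by norm_num) hε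
    filter_upwards [eventually_Ioo, eventually_lower hlt, hsmall, hXδ] with r hr hlow hsm hX2
    refine ⟨hr, ?_⟩
    have hu0 : (0:ℝ) < 1 - r := by linarith [hr.2]
    have hu1 : 1 - r < 1 := by linarith [hr.1]
    have hX0 : (0:ℝ) < 1/(1-r) := by positivity
    set ρ := 1 - (1-r) ^ θ with hρdef
    have huθ0 : (0:ℝ) < (1-r) ^ θ := Real.rpow_pos_of_pos hu0 θ
    have hρ1 : ρ < 1 := by simp only [hρdef]; linarith
    have hρτ : τ < ρ := by
      have := lt_of_lt_of_le hsm (min_le_left _ _); simp only [hρdef]; linarith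
    have hρr₀ : r₀ ≤ ρ := by
      have := lt_of_lt_of_le hsm ((min_le_right _ _).trans (min_le_left _ _))
      simp only [hρdef]; linarith
    have hρhalf : (1:ℝ)/2 ≤ ρ := by
      have := lt_of_lt_of_le hsm ((min_le_right _ _).trans (min_le_right _ _))
      simp only [hρdef]; linarith
    have hρpos : (0:ℝ) < ρ := by linarith
    have hρltr : ρ < r := by
      have h1 : (1-r) ^ (1:ℝ) < (1-r) ^ θ :=
        Real.rpow_lt_rpow_of_exponent_gt hu0 hu1 hθ1
      rw [Real.rpow_one] at h1
      simp only [hρdef]; linarith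
    -- upper bound at ρ
    have hupρ : Real.log (maxMod f ρ) ≤ (1/(1-ρ)) ^ b' := hbound ρ hρτ hρ1
    have h1ρ : 1 - ρ = (1-r) ^ θ := by simp [hρdef]
    have hXθ : 1/(1-ρ) = (1/(1-r)) ^ θ := by
      rw [h1ρ, one_div, one_div, ← Real.inv_rpow hu0.le]
    have hupρ' : Real.log (maxMod f ρ) ≤ (1/(1-r)) ^ (a' - δ) := by
      calc Real.log (maxMod f ρ) ≤ ((1/(1-r)) ^ θ) ^ b' := by rw [← hXθ]; exact hupρ
        _ = (1/(1-r)) ^ (θ * b') := by rw [← Real.rpow_mul hX0.le]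
        _ = (1/(1-r)) ^ (a' - δ) := by rw [hθb']
    have hXsub : (1/(1-r)) ^ (a' - δ) ≤ (1/(1-r)) ^ a' / 2 := by
      rw [Real.rpow_sub hX0]
      apply div_le_div_of_nonneg_left (Real.rpow_pos_of_pos hX0 a').le (by norm_num) hX2
    -- numerator
    have hXlow := logM_lower hr ha' hlow
    have hN : (1/(1-r)) ^ a' / 2 ≤ Real.log (maxMod f r) - Real.log (maxMod f ρ) := by
      have := hupρ'.trans hXsub
      linarith
    have hNn : (0:ℝ) ≤ Real.log (maxMod f r) - Real.log (maxMod f ρ) := by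
      have : (0:ℝ) < (1/(1-r)) ^ a' := Real.rpow_pos_of_pos hX0 a'
      linarith
    -- denominator
    have hD0 : 0 < Real.log r - Real.log ρ := by
      have := Real.log_lt_log hρpos hρltr; linarith
    have hDle : Real.log r - Real.log ρ ≤ 2 * (1-r) ^ θ := by
      have hlogdiv : Real.log r - Real.log ρ = Real.log (r / ρ) :=
        (Real.log_div (by linarith [hr.1] : r ≠ 0) hρpos.ne').symm
      have h2 : Real.log (r / ρ) ≤ r / ρ - 1 :=
        Real.log_le_sub_one_of_pos (div_pos (by linarith [hr.1]) hρpos)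
      have h3 : r / ρ - 1 = (r - ρ) / ρ := by field_simp
      have h4 : (r - ρ) / ρ ≤ (r - ρ) / (1/2) :=
        div_le_div_of_nonneg_left (by linarith) (by norm_num) hρhalf
      have h5 : (r - ρ) / (1/2) = 2 * (r - ρ) := by ring
      have h6 : 2 * (r - ρ) ≤ 2 * (1 - ρ) := by linarith [hr.2]
      rw [hlogdiv]
      calc Real.log (r/ρ) ≤ r/ρ - 1 := h2
        _ = (r - ρ)/ρ := h3
        _ ≤ 2 * (r - ρ) := by rw [← h5]; exact h4
        _ ≤ 2 * (1 - ρ) := h6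
        _ = 2 * (1-r) ^ θ := by rw [h1ρ]
    -- combine
    have hslope := Kfun_ge_slope hf h0 hM hρr₀ hρltr hr.2
    have hdiv : ((1/(1-r)) ^ a' / 2) / (2 * (1-r) ^ θ) ≤
        (Real.log (maxMod f r) - Real.log (maxMod f ρ)) / (Real.log r - Real.log ρ) :=
      div_le_div₀ hNn hN hD0 hDle
    have heq : ((1/(1-r)) ^ a' / 2) / (2 * (1-r) ^ θ) = (1/4) * (1/(1-r)) ^ (a' + θ) := by
      have huX : (1-r) ^ θ = ((1/(1-r)) ^ θ)⁻¹ := by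
        rw [one_div, Real.inv_rpow hu0.le, inv_inv]
      rw [huX, Real.rpow_add hX0]
      have hXθpos : (0:ℝ) < (1/(1-r)) ^ θ := Real.rpow_pos_of_pos hX0 θ
      field_simp
      ring
    rw [heq] at hdiv
    exact hdiv.trans hslope
  have heq2 : a' + θ - ε = a - 2*ε + (a-ε)/(b+2*ε) := by
    simp only [ha'def, hθdef, hb'def]; ring_nf
  rwa [heq2] at key

lemma lowerStar_nonneg : (0:EReal) ≤ lowerStar f := by
  refine Filter.le_liminf_of_le (by isBoundedDefault) ?_
  filter_upwards [eventually_Ioo] with r hr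
  have : (0:ℝ) ≤ logPlus (Kfun f r) / Real.log (1/(1-r)) :=
    div_nonneg (logPlus_nonneg _) (L_pos hr).le
  exact_mod_cast this

lemma lowerOrder_nonneg : (0:EReal) ≤ lowerOrder f := by
  refine Filter.le_liminf_of_le (by isBoundedDefault) ?_
  filter_upwards [eventually_Ioo] with r hr
  have : (0:ℝ) ≤ logPlus (logPlus (maxMod f r)) / Real.log (1/(1-r)) :=
    div_nonneg (logPlus_nonneg _) (L_pos hr).le
  exact_mod_cast this

lemma coe_le_lowerStar (hf : DifferentiableOn ℂ f (ball (0:ℂ) 1))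
    (hsigma : 0 < upperOrder f) {c : ℝ} (hc : ((c:ℝ):EReal) < lowerOrder f) :
    ((c:ℝ):EReal) ≤ lowerStar f := by
  rcases le_or_gt c 0 with h | h
  · exact le_trans (by exact_mod_cast h) lowerStar_nonneg
  · obtain ⟨c', hc1, hc2⟩ := EReal.exists_between_coe_real hc
    have hcc' : c < c' := by exact_mod_cast hc1
    have hε : (0:ℝ) < (c' - c)/2 := by linarith
    have hεa : (c' - c)/2 < c' := by linarith
    have := estimate_one hf hsigma hε hεa hc2.le
    have heq : c' - 2*((c' - c)/2) = c := by ring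
    rwa [heq] at this

end MMaux

/-- If `f` is analytic in the unit disc and `σ_M(f) > 0`, then
`λ_M(f) + λ_M(f)/σ_M(f) ≤ λ_*(f)` (in `EReal`, where division by `∞` gives `0`). -/
theorem lowerOrder_add_div_le_lowerStar (f : ℂ → ℂ)
    (hf : DifferentiableOn ℂ f (Metric.ball (0:ℂ) 1))
    (hsigma : 0 < upperOrder f) :
    lowerOrder f + lowerOrder f / upperOrder f ≤ lowerStar f := by
  rcases eq_or_lt_of_le (lowerOrder_nonneg (f := f)) with hzero | hpos
  · rw [← hzero, EReal.zero_div, add_zero]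
    exact lowerStar_nonneg
  · have hlamle : lowerOrder f ≤ lowerStar f := by
      by_contra hcon
      push_neg at hcon
      obtain ⟨c, hc1, hc2⟩ := EReal.exists_between_coe_real hcon
      exact absurd (coe_le_lowerStar hf hsigma hc2) (not_le.mpr hc1)
    rcases eq_top_or_lt_top (upperOrder f) with hsigtop | hsigfin
    · rw [hsigtop, EReal.div_top, add_zero]
      exact hlamle
    · -- σ finite
      have hlamσ : lowerOrder f ≤ upperOrder f :=
        Filter.liminf_le_limsup (by isBoundedDefault) (by isBoundedDefault)
      have hlamfin : lowerOrder f < ⊤ := lt_of_le_of_lt hlamσ hsigfin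
      have hlambot : lowerOrder f ≠ ⊥ := fun h => by simp [h] at hpos
      have hsigbot : upperOrder f ≠ ⊥ := fun h => by
        rw [h] at hsigma; exact absurd hsigma (by simp)
      set lr := (lowerOrder f).toReal with hlrdef
      set sr := (upperOrder f).toReal with hsrdef
      have hlameq : ((lr:ℝ):EReal) = lowerOrder f := EReal.coe_toReal hlamfin.ne hlambot
      have hsigeq : ((sr:ℝ):EReal) = upperOrder f := EReal.coe_toReal hsigfin.ne hsigbot
      have hlr : 0 < lr := by
        have : ((0:ℝ):EReal) < ((lr:ℝ):EReal) := by rw [hlameq]; exact_mod_cast hpos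
        exact_mod_cast this
      have hsr : 0 < sr := by
        have : ((0:ℝ):EReal) < ((sr:ℝ):EReal) := by rw [hsigeq]; exact_mod_cast hsigma
        exact_mod_cast this
      have hlrsr : lr ≤ sr := by
        have : ((lr:ℝ):EReal) ≤ ((sr:ℝ):EReal) := by rw [hlameq, hsigeq]; exact hlamσ
        exact_mod_cast this
      have goal_eq : lowerOrder f + lowerOrder f / upperOrder f
          = ((lr + lr/sr : ℝ) : EReal) := by
        rw [← hlameq, ← hsigeq, ← EReal.coe_div, ← EReal.coe_add]
      rw [goal_eq]
      -- limit argument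
      set g : ℝ → ℝ := fun ε => lr - 2*ε + (lr - ε)/(sr + 2*ε) with hgdef
      have hgcont : ContinuousAt g 0 := by
        apply ContinuousAt.add
        · fun_prop
        · apply ContinuousAt.div
          · fun_prop
          · fun_prop
          · norm_num [hsr.ne']
      have hg0 : g 0 = lr + lr/sr := by simp [hgdef]
      have htend : Tendsto (fun ε => ((g ε : ℝ) : EReal)) (nhdsWithin (0:ℝ) (Set.Ioi (0:ℝ)))
          (nhds ((lr + lr/sr : ℝ) : EReal)) := by
        rw [← hg0]
        exact (continuous_coe_real_ereal.continuousAt.comp hgcont).continuousWithinAt.tendsto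
      apply le_of_tendsto htend
      filter_upwards [Ioo_mem_nhdsGT_of_mem (⟨le_rfl, hlr⟩ : (0:ℝ) ∈ Ico 0 lr)] with ε hε
      have := estimate_two hf hsigma hε.1 hε.2 hsr hlrsr (le_of_eq hlameq) (le_of_eq hsigeq.symm)
      exact this
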